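/- Let λ be an uncountable regular cardinal and ⟨A_n : n < ω⟩ an increasing chain of infinite subsets of ω with union A. Let ⟨f_α : α < λ⟩ be <*-increasing in A → Ord such that each restriction ⟨f_α ↾ A_n⟩ has an exact upper bound g_n of pointwise cofinality λ. Then there exists g : A → Ord with cf(g(i)) = λ for all i ∈ A and g ↾ A_n =* g_n for every n (equality modulo finite). -/

import Mathlib

open Cardinal Ordinal

/-- mod-finite domination on a set `S ⊆ ℕ`. -/
def ltStarOn (S : Set ℕ) (u v : ℕ → Ordinal) : Prop := {i | i ∈ S ∧ ¬ u i < v i}.Finite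

/-- gluing exact upper bounds. If each restriction ⟨f_α ↾ A_n⟩ has an exact
upper bound g_n of pointwise cofinality λ, then there is g : A → Ord of pointwise
cofinality λ with g ↾ A_n =* g_n for every n. -/
theorem stmt_16 (lam : Cardinal.{0}) (hreg : lam.IsRegular) (hunc : ℵ₀ < lam)
    (A : ℕ → Set ℕ) (hmono : ∀ n, A n ⊆ A (n + 1)) (hinf : ∀ n, (A n).Infinite)
    (f : Ordinal → ℕ → Ordinal)
    (hf : ∀ α < lam.ord, ∀ β < lam.ord, α < β → ltStarOn (⋃ n, A n) (f α) (f β))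
    (gs : ℕ → ℕ → Ordinal)
    (hub : ∀ n, ∀ α < lam.ord, ltStarOn (A n) (f α) (gs n))
    (hexact : ∀ n, ∀ u : ℕ → Ordinal, ltStarOn (A n) u (gs n) →
      ∃ α < lam.ord, ltStarOn (A n) u (f α))
    (hcof : ∀ n, ∀ i ∈ A n, ((gs n) i).cof = lam) :
    ∃ g : ℕ → Ordinal, (∀ i ∈ ⋃ n, A n, (g i).cof = lam) ∧
      ∀ n, {i | i ∈ A n ∧ g i ≠ gs n i}.Finite := by
  classical
  have hA : ∀ m n, m ≤ n → A m ⊆ A n := fun m n h =>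
    monotone_nat_of_le_succ (fun k => hmono k) h
  -- positivity of gs n on A n from cofinality
  have hpos : ∀ n, ∀ i ∈ A n, 0 < gs n i := by
    intro n i hi
    rcases eq_zero_or_pos (gs n i) with h0 | h
    · exfalso
      have hc := hcof n i hi
      rw [h0, Ordinal.cof_zero] at hc
      exact hreg.pos.ne' hc.symm
    · exact h
  -- uniqueness of exact upper bounds mod finite: gs m =* gs n on A m for m ≤ n
  have key : ∀ m n, m ≤ n → {i | i ∈ A m ∧ gs m i ≠ gs n i}.Finite := by
    intro m n hmn
    have hBfin : {i | i ∈ A m ∧ gs m i < gs n i}.Finite := by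
      by_contra hB
      set B := {i | i ∈ A m ∧ gs m i < gs n i} with hBdef
      set u : ℕ → Ordinal := fun i => if i ∈ B then gs m i else 0 with hu
      have h1 : ltStarOn (A n) u (gs n) := by
        have hempty : {i | i ∈ A n ∧ ¬ u i < gs n i} = ∅ := by
          ext i
          simp only [Set.mem_setOf_eq, Set.mem_empty_iff_false, iff_false, not_and, not_not]
          intro hin
          by_cases hc : i ∈ B
          · simpa [hu, hc] using hc.2
          · simpa [hu, hc] using hpos n i hin
        rw [ltStarOn, hempty]
        exact Set.finite_empty
      obtain ⟨α, hα, h2⟩ := hexact n u h1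
      have h3 := hub m α hα
      apply hB
      apply Set.Finite.subset (h2.union h3)
      intro i hi
      by_cases hc : u i < f α i
      · right
        refine ⟨hi.1, ?_⟩
        have hui : u i = gs m i := by simp [hu, hi]
        rw [hui] at hc
        exact lt_asymm hc
      · left
        exact ⟨hA m n hmn hi.1, hc⟩
    have hB'fin : {i | i ∈ A m ∧ gs n i < gs m i}.Finite := by
      by_contra hB
      set B := {i | i ∈ A m ∧ gs n i < gs m i} with hBdef
      set u : ℕ → Ordinal := fun i => if i ∈ B then gs n i else 0 with hu
      have h1 : ltStarOn (A m) u (gs m) := by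
        have hempty : {i | i ∈ A m ∧ ¬ u i < gs m i} = ∅ := by
          ext i
          simp only [Set.mem_setOf_eq, Set.mem_empty_iff_false, iff_false, not_and, not_not]
          intro hin
          by_cases hc : i ∈ B
          · simpa [hu, hc] using hc.2
          · simpa [hu, hc] using hpos m i hin
        rw [ltStarOn, hempty]
        exact Set.finite_empty
      obtain ⟨α, hα, h2⟩ := hexact m u h1
      have h3 := hub n α hα
      apply hB
      apply Set.Finite.subset (h2.union h3)
      intro i hi
      by_cases hc : u i < f α i
      · right
        refine ⟨hA m n hmn hi.1, ?_⟩
        have hui : u i = gs n i := by simp [hu, hi]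
        rw [hui] at hc
        exact lt_asymm hc
      · left
        exact ⟨hi.1, hc⟩
    apply Set.Finite.subset (hBfin.union hB'fin)
    intro i ⟨hi, hne⟩
    rcases hne.lt_or_gt with h | h
    · exact Or.inl ⟨hi, h⟩
    · exact Or.inr ⟨hi, h⟩
  -- define g by gluing
  refine ⟨fun i => if h : ∃ n, i ∈ A n then gs (Nat.find h) i else 0, ?_, ?_⟩
  · intro i hi
    have h : ∃ n, i ∈ A n := Set.mem_iUnion.mp hi
    simp only [dif_pos h]
    exact hcof _ i (Nat.find_spec h)
  · intro n
    apply Set.Finite.subset (Set.Finite.biUnion (Set.finite_le_nat n)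
      (fun m (hm : m ≤ n) => key m n hm))
    intro i ⟨hin, hne⟩
    have h : ∃ k, i ∈ A k := ⟨n, hin⟩
    simp only [dif_pos h] at hne
    exact Set.mem_biUnion (Nat.find_min' h hin) ⟨Nat.find_spec h, hne⟩
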